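/- There exists a constant C (e.g. C = 28) and n₀ such that for all n ≥ n₀ there exists a set Q of at most C·n·log n permutations of [n] with the following property: for every nonempty I ⊆ [n], every injective v : I → [n], and every function c : I → [n] with c(i) ≠ v(i) for all i ∈ I, there exists q ∈ Q such that q(i) ≠ v(i) for all i ∈ I but q(i) = c(i) for some i ∈ I. -/

import Mathlib

open Finset Equiv Equiv.Perm Nat



-- derangement lower bound
lemma derange_lb : ∀ m : ℕ, 11 * (m+4)! ≤ 30 * numDerangements (m+4) ∧
    11 * (m+5)! ≤ 30 * numDerangements (m+5) := by
  intro m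
  induction m with
  | zero => constructor <;> decide
  | succ k ih =>
    refine ⟨ih.2, ?_⟩
    have h : numDerangements (k+4+2) = (k+4+1) * (numDerangements (k+4) + numDerangements (k+4+1)) :=
      numDerangements_add_two (k+4)
    have hf : (k+6)! = (k+5) * ((k+4)! + (k+5)!) := by
      have h1 : (k+6)! = (k+6) * (k+5)! := Nat.factorial_succ (k+5)
      have h2 : (k+5)! = (k+5) * (k+4)! := Nat.factorial_succ (k+4)
      nlinarith [h1, h2]
    have h4 := ih.1
    have h5 := ih.2
    show 11 * (k+6)! ≤ 30 * numDerangements (k+6)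
    have : numDerangements (k+6) = (k+5) * (numDerangements (k+4) + numDerangements (k+5)) := h
    rw [this, hf]
    nlinarith [h4, h5]


lemma derange_ge (n : ℕ) (hn : 4 ≤ n) : 11 * n ! ≤ 30 * numDerangements n := by
  obtain ⟨m, rfl⟩ : ∃ m, n = m + 4 := ⟨n - 4, by omega⟩
  exact (derange_lb m).1



lemma card_fix_two {n : ℕ} (a b : Fin n) (hab : a ≠ b) :
    (univ.filter fun h : Perm (Fin n) => h a = a ∧ h b = b).card ≤ (n-2)! := by
  classical
  set p : Fin n → Prop := fun x => x ≠ a ∧ x ≠ b with hp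
  have hcard : Fintype.card {x : Fin n // p x} = n - 2 := by
    rw [Fintype.card_subtype]
    have : (univ.filter fun x : Fin n => p x) = univ \ {a, b} := by
      ext x; simp only [mem_filter, mem_univ, true_and, mem_sdiff, mem_insert, mem_singleton, p]
      tauto
    rw [this, card_sdiff_of_subset (by simp)]
    simp [hab]
  have key : ∀ h : Perm (Fin n), h a = a → h b = b → ∀ x, p x ↔ p (h x) := by
    intro h ha hb x
    constructor
    · rintro ⟨h1, h2⟩
      exact ⟨fun e => h1 (h.injective (by rw [e, ha])), fun e => h2 (h.injective (by rw [e, hb]))⟩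
    · rintro ⟨h1, h2⟩
      refine ⟨fun e => h1 ?_, fun e => h2 ?_⟩ <;> rw [e] <;> [exact ha; exact hb]
  have : (univ.filter fun h : Perm (Fin n) => h a = a ∧ h b = b).card ≤
      Fintype.card (Perm {x : Fin n // p x}) := by
    apply Finset.card_le_card_of_injOn
      (fun h => if hh : h a = a ∧ h b = b then Perm.subtypePerm h (fun x => (key h hh.1 hh.2 x).symm) else 1)
      (fun _ _ => Finset.mem_univ _)
    intro g hg g' hg' he
    simp only [coe_filter, Set.mem_setOf_eq, mem_univ, true_and] at hg hg'
    simp only [dif_pos hg, dif_pos hg'] at he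
    ext x
    by_cases hx : p x
    · have := congrArg (fun (σ : Perm {x : Fin n // p x}) => (σ ⟨x, hx⟩ : Fin n)) he
      simp only [Perm.subtypePerm_apply] at this
      exact congrArg Fin.val this
    · simp only [p, not_and_or, not_not] at hx
      rcases hx with rfl | rfl
      · rw [hg.1, hg'.1]
      · rw [hg.2, hg'.2]
  calc (univ.filter fun h : Perm (Fin n) => h a = a ∧ h b = b).card
      ≤ Fintype.card (Perm {x : Fin n // p x}) := this
    _ = (n-2)! := by rw [Fintype.card_perm, hcard]

lemma two_point {n : ℕ} (a b x y : Fin n) (hab : a ≠ b) :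
    (univ.filter fun q : Perm (Fin n) => q a = x ∧ q b = y).card ≤ (n-2)! := by
  classical
  rcases Finset.eq_empty_or_nonempty (univ.filter fun q : Perm (Fin n) => q a = x ∧ q b = y)
    with he | ⟨q₀, hq₀⟩
  · simp only [he, card_empty]; positivity
  · simp only [mem_filter] at hq₀
    refine le_trans ?_ (card_fix_two a b hab)
    apply Finset.card_le_card_of_injOn (fun q => q₀⁻¹ * q)
    · intro q hq
      simp only [coe_filter, Set.mem_setOf_eq, mem_filter, mem_univ, true_and] at hq ⊢
      constructor
      · rw [Perm.mul_apply, hq.1, ← hq₀.2.1]; simp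
      · rw [Perm.mul_apply, hq.2, ← hq₀.2.2]; simp
    · intro g hg g' hg' he
      simpa using congrArg (fun h => q₀ * h) he



lemma extend_perm {n : ℕ} (I : Finset (Fin n)) (v : Fin n → Fin n) (hv : Set.InjOn v I) :
    ∃ σ : Perm (Fin n), ∀ i ∈ I, σ i = v i := by
  classical
  have hcard : (univ \ I).card = (univ \ I.image v).card := by
    rw [card_sdiff_of_subset (subset_univ _), card_sdiff_of_subset (subset_univ _), Finset.card_image_of_injOn hv]
  let e := Finset.equivOfCardEq hcard
  let f : Fin n → Fin n := fun i => if h : i ∈ I then v i else (e ⟨i, by simp [h]⟩ : Fin n)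
  have hinj : Function.Injective f := by
    intro i j hij
    simp only [f] at hij
    by_cases hi : i ∈ I <;> by_cases hj : j ∈ I
    · rw [dif_pos hi, dif_pos hj] at hij
      exact hv hi hj hij
    · rw [dif_pos hi, dif_neg hj] at hij
      exfalso
      have := (e ⟨j, by simp [hj]⟩).2
      rw [← hij] at this
      simp [Finset.mem_image] at this
      exact this i hi rfl
    · rw [dif_neg hi, dif_pos hj] at hij
      exfalso
      have := (e ⟨i, by simp [hi]⟩).2
      rw [hij] at this
      simp [Finset.mem_image] at this
      exact this j hj rfl
    · rw [dif_neg hi, dif_neg hj] at hij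
      exact Subtype.ext_iff.mp (e.injective (Subtype.ext hij))
  refine ⟨Equiv.ofBijective f (Finite.injective_iff_bijective.mp hinj), fun i hi => ?_⟩
  simp [Equiv.ofBijective, f, dif_pos hi]

lemma avoid_card_ge {n : ℕ} (hn : 4 ≤ n) (I : Finset (Fin n)) (v : Fin n → Fin n)
    (hv : Set.InjOn v I) :
    11 * n ! ≤ 30 * (univ.filter fun q : Perm (Fin n) => ∀ i ∈ I, q i ≠ v i).card := by
  classical
  obtain ⟨σ, hσ⟩ := extend_perm I v hv
  have h1 : (univ.filter fun q : Perm (Fin n) => ∀ i, q i ≠ σ i).card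
      ≤ (univ.filter fun q : Perm (Fin n) => ∀ i ∈ I, q i ≠ v i).card := by
    apply Finset.card_le_card
    intro q hq
    simp only [mem_filter, mem_univ, true_and] at hq ⊢
    intro i hi
    rw [← hσ i hi]; exact hq i
  have h2 : (univ.filter fun q : Perm (Fin n) => ∀ i, q i ≠ σ i).card = numDerangements n := by
    rw [← card_derangements_fin_eq_numDerangements, ← Set.toFinset_card]
    apply Finset.card_bij (fun q _ => σ⁻¹ * q)
    · intro q hq
      simp only [mem_filter, mem_univ, true_and] at hq
      rw [Set.mem_toFinset]
      intro x hx
      apply hq x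
      have := congrArg σ hx
      simpa using this
    · intro a ha b hb hab
      simpa using congrArg (fun h => σ * h) hab
    · intro d hd
      refine ⟨σ * d, ?_, by simp [mul_assoc]⟩
      simp only [mem_filter, mem_univ, true_and]
      intro i
      have hd : ∀ x, d x ≠ x := Set.mem_toFinset.mp hd
      intro hσd
      exact hd i (σ.injective (by simpa using hσd))
  calc 11 * n ! ≤ 30 * numDerangements n := derange_ge n hn
    _ = 30 * (univ.filter fun q : Perm (Fin n) => ∀ i, q i ≠ σ i).card := by rw [h2]
    _ ≤ _ := by exact Nat.mul_le_mul_left 30 h1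



lemma good_card_ge {n : ℕ} (hn : 31 ≤ n) (I : Finset (Fin n)) (v c : Fin n → Fin n)
    (hv : Set.InjOn v I) (hc : ∀ i ∈ I, c i ≠ v i) :
    I.card * n ! ≤ 9 * n *
      (univ.filter fun q : Perm (Fin n) =>
        (∀ i ∈ I, q i ≠ v i) ∧ ∃ i ∈ I, q i = c i).card := by
  classical
  set k := I.card with hk
  set G := univ.filter fun q : Perm (Fin n) =>
        (∀ i ∈ I, q i ≠ v i) ∧ ∃ i ∈ I, q i = c i with hG
  set AB := univ.filter fun q : Perm (Fin n) => ∀ i ∈ I, q i ≠ v i ∧ q i ≠ c i with hAB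
  set AV := univ.filter fun q : Perm (Fin n) => ∀ i ∈ I, q i ≠ v i with hAV
  have hkn : k ≤ n := by
    calc k ≤ Fintype.card (Fin n) := Finset.card_le_univ I
    _ = n := Fintype.card_fin n
  -- split
  have hsplit : AV.card = G.card + AB.card := by
    have e1 : G = AV.filter (fun q => ∃ i ∈ I, q i = c i) := by
      rw [hG, hAV, Finset.filter_filter]
    have e2 : AB = AV.filter (fun q => ¬ ∃ i ∈ I, q i = c i) := by
      rw [hAB, hAV, Finset.filter_filter]
      apply Finset.filter_congr
      intro q _
      push_neg
      constructor
      · intro h; exact ⟨fun i hi => (h i hi).1, fun i hi => (h i hi).2⟩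
      · intro h i hi; exact ⟨h.1 i hi, h.2 i hi⟩
    rw [e1, e2, Finset.card_filter_add_card_filter_not]
  -- the switch map
  set sw : Perm (Fin n) × Fin n → Perm (Fin n) :=
    fun x => x.1 * Equiv.swap x.2 (x.1⁻¹ (c x.2)) with hsw
  have swj : ∀ q : Perm (Fin n), ∀ j, sw (q, j) j = c j := by
    intro q j
    simp [hsw, Equiv.swap_apply_left]
  have swp : ∀ q : Perm (Fin n), ∀ j, sw (q, j) (q⁻¹ (c j)) = q j := by
    intro q j
    simp [hsw, Equiv.swap_apply_right]
  have swo : ∀ q : Perm (Fin n), ∀ j i, i ≠ j → i ≠ q⁻¹ (c j) → sw (q, j) i = q i := by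
    intro q j i h1 h2
    have h2' : i ≠ q.symm (c j) := h2
    simp [hsw, Equiv.swap_apply_of_ne_of_ne h1 h2']
  set Pairs := AB ×ˢ I with hPairs
  set PG := Pairs.filter (fun x => sw x ∈ G) with hPG
  set PB := Pairs.filter (fun x => sw x ∉ G) with hPB
  have hPcard : PG.card + PB.card = AB.card * k := by
    rw [hPG, hPB, Finset.card_filter_add_card_filter_not, hPairs, Finset.card_product]
  -- membership facts for AB
  have hABmem : ∀ q ∈ AB, ∀ i ∈ I, q i ≠ v i ∧ q i ≠ c i := by
    intro q hq
    simpa [hAB] using hq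
  -- bad pairs characterization
  have hbad : ∀ x ∈ PB, x.1⁻¹ (c x.2) ∈ I ∧ x.1 x.2 = v (x.1⁻¹ (c x.2)) := by
    rintro ⟨q, j⟩ hx
    simp only [hPB, Finset.mem_filter, hPairs, Finset.mem_product] at hx
    obtain ⟨⟨hqAB, hjI⟩, hnotG⟩ := hx
    set p := q⁻¹ (c j) with hp
    by_contra hcon
    apply hnotG
    simp only [hG, Finset.mem_filter, Finset.mem_univ, true_and]
    constructor
    · intro i hi
      by_cases hij : i = j
      · subst hij
        rw [swj]
        exact hc i hi
      · by_cases hip : i = p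
        · subst hip
          rw [swp]
          -- need q j ≠ v p ; from hcon : ¬(p ∈ I ∧ q j = v p)
          intro hqj
          exact hcon ⟨hi, hqj⟩
        · rw [swo q j i hij hip]
          exact (hABmem q hqAB i hi).1
    · exact ⟨j, hjI, swj q j⟩
  -- bound on bad pairs
  have hPBcard : PB.card ≤ k * (k * (n-2)!) := by
    have hsub : PB ⊆ I.biUnion (fun j =>
        (univ.filter (fun q : Perm (Fin n) => q⁻¹ (c j) ∈ I ∧ q j = v (q⁻¹ (c j)))) ×ˢ {j}) := by
      rintro ⟨q, j⟩ hx
      have h1 := hbad _ hx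
      simp only [hPB, Finset.mem_filter, hPairs, Finset.mem_product] at hx
      simp only [Finset.mem_biUnion]
      exact ⟨j, hx.1.2, by simp only [Perm.inv_def] at h1; simp [h1.1, h1.2]⟩
    refine le_trans (Finset.card_le_card hsub) (le_trans (Finset.card_biUnion_le) ?_)
    have hbnd : ∀ j ∈ I,
        ((univ.filter (fun q : Perm (Fin n) => q⁻¹ (c j) ∈ I ∧ q j = v (q⁻¹ (c j)))) ×ˢ
          ({j} : Finset (Fin n))).card ≤ k * (n-2)! := by
      intro j hj
      rw [Finset.card_product, Finset.card_singleton, mul_one]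
      have hsub2 : (univ.filter (fun q : Perm (Fin n) => q⁻¹ (c j) ∈ I ∧ q j = v (q⁻¹ (c j))))
          ⊆ I.biUnion (fun p => univ.filter (fun q : Perm (Fin n) => q p = c j ∧ q j = v p)) := by
        intro q hq
        simp only [Finset.mem_filter, Finset.mem_univ, true_and] at hq
        simp only [Finset.mem_biUnion]
        exact ⟨q⁻¹ (c j), hq.1, by simp [hq.2]⟩
      refine le_trans (Finset.card_le_card hsub2) (le_trans (Finset.card_biUnion_le) ?_)
      have : ∀ p ∈ I,
          (univ.filter (fun q : Perm (Fin n) => q p = c j ∧ q j = v p)).card ≤ (n-2)! := by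
        intro p hp
        by_cases hpj : p = j
        · subst hpj
          have : (univ.filter (fun q : Perm (Fin n) => q p = c p ∧ q p = v p)) = ∅ := by
            apply Finset.filter_false_of_mem
            rintro q _ ⟨h1, h2⟩
            exact hc p hp (h1 ▸ h2 ▸ rfl)
          rw [this]
          simp
        · exact two_point p j (c j) (v p) hpj
      calc _ ≤ ∑ p ∈ I, (n-2)! := Finset.sum_le_sum this
        _ = k * (n-2)! := by rw [Finset.sum_const, smul_eq_mul]
    calc _ ≤ ∑ j ∈ I, k * (n-2)! := Finset.sum_le_sum hbnd
      _ = k * (k * (n-2)!) := by rw [Finset.sum_const, smul_eq_mul]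
  -- bound on good pairs (multiplicity)
  have hPGcard : PG.card ≤ (2 * n) * G.card := by
    have himg : PG.image sw ⊆ G := by
      intro q' hq'
      obtain ⟨x, hx, rfl⟩ := Finset.mem_image.mp hq'
      exact (Finset.mem_filter.mp hx).2
    have := Finset.card_le_mul_card_image (f := sw) PG (2*n) ?fib
    · exact le_trans this (Nat.mul_le_mul_left _ (Finset.card_le_card himg))
    case fib =>
      intro q' hq'
      obtain ⟨x₀, hx₀, hx₀e⟩ := Finset.mem_image.mp hq'
      obtain ⟨q₀, j₀⟩ := x₀
      set p₀ := q₀⁻¹ (c j₀) with hp₀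
      simp only [hPG, Finset.mem_filter, hPairs, Finset.mem_product] at hx₀
      set H := I.filter (fun i => q' i = c i) with hH
      have hHsub : H ⊆ {j₀, p₀} := by
        intro i hi
        simp only [hH, Finset.mem_filter] at hi
        by_contra hcon
        simp only [Finset.mem_insert, Finset.mem_singleton] at hcon
        push_neg at hcon
        have : q' i = q₀ i := by rw [← hx₀e]; exact swo q₀ j₀ i hcon.1 hcon.2
        exact (hABmem q₀ hx₀.1.1 i hi.1).2 (this ▸ hi.2)
      have hHcard : H.card ≤ 2 := le_trans (Finset.card_le_card hHsub)
        (le_trans (Finset.card_insert_le _ _) (by simp))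
      -- injection of the fiber into H ×ˢ univ
      have hinj : (PG.filter (fun x => sw x = q')).card ≤ (H ×ˢ (univ : Finset (Fin n))).card := by
        apply Finset.card_le_card_of_injOn (fun x => (x.2, x.1⁻¹ (c x.2)))
        · rintro ⟨q, j⟩ hx
          simp only [Finset.mem_coe, Finset.mem_filter, hPG, hPairs, Finset.mem_product] at hx
          obtain ⟨⟨⟨hqAB, hjI⟩, -⟩, hswx⟩ := hx
          simp only [Finset.mem_coe, Finset.mem_product, Finset.mem_univ, and_true]
          simp only [hH, Finset.mem_filter]
          exact ⟨hjI, by rw [← hswx]; exact swj q j⟩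
        · rintro ⟨q, j⟩ hq ⟨r, l⟩ hr he
          simp only [Finset.coe_filter, Set.mem_setOf_eq] at hq hr
          simp only [Prod.mk.injEq] at he ⊢
          obtain ⟨hej, hep⟩ := he
          subst hej
          -- q = sw(q,j) * swap j p, and sw(q,j) = q' = sw(r,j)
          have hq2 : q = q' * Equiv.swap j (q⁻¹ (c j)) := by
            rw [← hq.2, hsw]
            simp [mul_assoc]
          have hr2 : r = q' * Equiv.swap j (r⁻¹ (c j)) := by
            rw [← hr.2, hsw]
            simp [mul_assoc]
          refine ⟨?_, rfl⟩
          rw [hq2, hr2, hep]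
      calc (PG.filter (fun x => sw x = q')).card ≤ (H ×ˢ (univ : Finset (Fin n))).card := hinj
        _ = H.card * n := by rw [Finset.card_product, Finset.card_univ, Fintype.card_fin]
        _ ≤ 2 * n := Nat.mul_le_mul_right n hHcard
  -- assemble
  have hAVcard : 11 * n ! ≤ 30 * AV.card := avoid_card_ge (by omega) I v hv
  obtain ⟨m, rfl⟩ : ∃ m, n = m + 31 := ⟨n - 31, by omega⟩
  have hfact : (m+31)! = (m+31)*((m+30)*(m+29)!) := by
    rw [show (m+31) = (m+30)+1 from rfl, Nat.factorial_succ,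
      show (m+30) = (m+29)+1 from rfl, Nat.factorial_succ]
  have key30 : 30*(k*(k*((m+31) - 2)!)) ≤ k*(m+31)! := by
    have h2 : (m+31) - 2 = m + 29 := by omega
    rw [h2, hfact]
    calc 30*(k*(k*(m+29)!)) = k*((30*k)*(m+29)!) := by ring
      _ ≤ k*((30*(m+31))*(m+29)!) := by
          exact Nat.mul_le_mul_left _ (Nat.mul_le_mul_right _ (Nat.mul_le_mul_left _ hkn))
      _ ≤ k*((m+31)*((m+30)*(m+29)!)) := by
          apply Nat.mul_le_mul_left
          calc 30*(m+31)*(m+29)! = (m+31)*(30*(m+29)!) := by ring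
            _ ≤ (m+31)*((m+30)*(m+29)!) :=
              Nat.mul_le_mul_left _ (Nat.mul_le_mul_right _ (by omega))
  have big : 11*(k*(m+31)!) ≤ 90*((m+31)*G.card) + k*(m+31)! := by
    calc 11*(k*(m+31)!) = k*(11*(m+31)!) := by ring
      _ ≤ k*(30*AV.card) := Nat.mul_le_mul_left _ hAVcard
      _ = 30*(k*G.card) + 30*(AB.card*k) := by rw [hsplit]; ring
      _ = 30*(k*G.card) + 30*PG.card + 30*PB.card := by rw [← hPcard]; ring
      _ ≤ 30*((m+31)*G.card) + 30*(2*(m+31)*G.card) + 30*(k*(k*((m+31) - 2)!)) := by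
          refine Nat.add_le_add (Nat.add_le_add ?_ ?_) ?_
          · exact Nat.mul_le_mul_left _ (Nat.mul_le_mul_right _ hkn)
          · exact Nat.mul_le_mul_left _ hPGcard
          · exact Nat.mul_le_mul_left _ hPBcard
      _ ≤ 90*((m+31)*G.card) + k*(m+31)! := by
          have : 30*((m+31)*G.card) + 30*(2*(m+31)*G.card) = 90*((m+31)*G.card) := by ring
          omega
  have h10 : 10*(k*(m+31)!) ≤ 10*(9*(m+31)*G.card) := by
    have : 90*((m+31)*G.card) = 10*(9*(m+31)*G.card) := by ring
    omega
  exact Nat.le_of_mul_le_mul_left h10 (by norm_num)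



-- numeric helpers
lemma exp_one_lt_three : Real.exp 1 < 3 :=
  lt_trans Real.exp_one_lt_d9 (by norm_num)

lemma log_ge_18 {n : ℕ} (hn : 10^8 ≤ n) : (18:ℝ) ≤ Real.log n := by
  have h1 : Real.exp 18 ≤ (n:ℝ) := by
    have h2 : Real.exp 18 = (Real.exp 1)^(18:ℕ) := by
      rw [← Real.exp_nat_mul]; norm_num
    have h3 : (Real.exp 1)^(18:ℕ) ≤ (2.7182818286:ℝ)^(18:ℕ) :=
      pow_le_pow_left₀ (Real.exp_nonneg 1) Real.exp_one_lt_d9.le 18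
    have h4 : (2.7182818286:ℝ)^(18:ℕ) ≤ 10^8 := by norm_num
    have h5 : (10^8 : ℝ) ≤ (n:ℝ) := by exact_mod_cast hn
    linarith
  calc (18:ℝ) = Real.log (Real.exp 18) := (Real.log_exp 18).symm
    _ ≤ Real.log n := Real.log_le_log (Real.exp_pos 18) h1

set_option maxHeartbeats 1000000 in
theorem main_step {n : ℕ} (hn : 10^8 ≤ n) :
    ∃ Q : Finset (Equiv.Perm (Fin n)),
      (Q.card : ℝ) ≤ 28 * n * Real.log n ∧
      ∀ (I : Finset (Fin n)), I.Nonempty →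
        ∀ (v c : Fin n → Fin n), Set.InjOn v I →
          (∀ i ∈ I, c i ≠ v i) →
          ∃ q ∈ Q, (∀ i ∈ I, q i ≠ v i) ∧ ∃ i ∈ I, q i = c i := by
  classical
  have hn31 : 31 ≤ n := le_trans (by norm_num) hn
  have hn1 : 1 ≤ n := le_trans (by norm_num) hn
  have hnR : (1:ℝ) ≤ (n:ℝ) := by exact_mod_cast hn1
  have hnpos : (0:ℝ) < n := by linarith
  set L : ℝ := Real.log n with hL
  have hL18 : (18:ℝ) ≤ L := log_ge_18 hn
  have hLpos : 0 < L := by linarith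
  set m : ℕ := ⌊28 * (n:ℝ) * L⌋₊ with hm
  have hmreal : 28 * (n:ℝ) * L - 1 ≤ (m:ℝ) := by
    have := Nat.lt_floor_add_one (28 * (n:ℝ) * L)
    push_cast [hm]
    linarith [this]
  have hmle : (m:ℝ) ≤ 28 * (n:ℝ) * L := Nat.floor_le (by positivity)
  set N : ℕ := n ! with hN
  -- triple space
  set GoodSet : Finset (Fin n) × ((Fin n → Fin n) × (Fin n → Fin n)) → Finset (Perm (Fin n)) :=
    fun t => univ.filter fun q : Perm (Fin n) =>
      (∀ i ∈ t.1, q i ≠ t.2.1 i) ∧ ∃ i ∈ t.1, q i = t.2.2 i with hGoodSet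
  set T : Finset (Finset (Fin n) × ((Fin n → Fin n) × (Fin n → Fin n))) :=
    univ.filter (fun t => t.1.Nonempty ∧ Set.InjOn t.2.1 t.1 ∧ (∀ i ∈ t.1, t.2.2 i ≠ t.2.1 i)
      ∧ ∀ i ∉ t.1, t.2.1 i = i ∧ t.2.2 i = i) with hT
  -- the key cardinality bound per triple
  have hkey : ∀ t ∈ T, t.1.card * N ≤ 9 * n * (GoodSet t).card := by
    intro t ht
    simp only [hT, mem_filter, mem_univ, true_and] at ht
    exact good_card_ge hn31 t.1 t.2.1 t.2.2 ht.2.1 ht.2.2.1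
  have hNperm : Fintype.card (Perm (Fin n)) = N := by
    rw [Fintype.card_perm, Fintype.card_fin]
  have hGle : ∀ t, (GoodSet t).card ≤ N := fun t => le_trans (Finset.card_le_univ _)
    (le_of_eq hNperm)
  -- real bound per triple
  have hreal : ∀ t ∈ T, ((N - (GoodSet t).card : ℕ) : ℝ)^m ≤
      3 * (N:ℝ)^m * Real.exp (-(28 * L / 9) * t.1.card) := by
    intro t ht
    set k : ℕ := t.1.card with hk
    have hkn : k ≤ n := le_trans (Finset.card_le_univ _)
      (le_of_eq (Fintype.card_fin n))
    have hNpos : (0:ℝ) < N := by exact_mod_cast Nat.factorial_pos n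
    have h1 : ((N - (GoodSet t).card : ℕ) : ℝ) ≤ (N:ℝ) * (1 - k/(9*n)) := by
      rw [Nat.cast_sub (hGle t)]
      have h2 : (k:ℝ) * N ≤ 9 * n * (GoodSet t).card := by exact_mod_cast hkey t ht
      have h9n : (0:ℝ) < 9*n := by linarith
      rw [mul_one_sub]
      have : (k:ℝ)/(9*n) * N ≤ ((GoodSet t).card : ℝ) := by
        rw [div_mul_eq_mul_div, div_le_iff₀ h9n]
        linarith [h2]
      linarith [this]
    have hfrac : (k:ℝ)/(9*n) ≤ 1/9 := by
      rw [div_le_div_iff₀ (by linarith) (by norm_num)]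
      have : (k:ℝ) ≤ n := by exact_mod_cast hkn
      linarith
    have hpos1 : (0:ℝ) ≤ 1 - k/(9*n) := by linarith
    have h3 : ((N - (GoodSet t).card : ℕ) : ℝ)^m ≤ ((N:ℝ) * (1 - k/(9*n)))^m :=
      pow_le_pow_left₀ (by positivity) h1 m
    have h4 : (1 - (k:ℝ)/(9*n)) ≤ Real.exp (-(k/(9*n))) := by
      have := Real.add_one_le_exp (-((k:ℝ)/(9*n)))
      linarith
    have h5 : ((N:ℝ) * (1 - k/(9*n)))^m ≤ (N:ℝ)^m * Real.exp (-(k/(9*n)))^m := by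
      rw [mul_pow]
      exact mul_le_mul_of_nonneg_left (pow_le_pow_left₀ hpos1 h4 m) (by positivity)
    have h6 : Real.exp (-((k:ℝ)/(9*n)))^m = Real.exp (-(k/(9*n)) * m) := by
      rw [← Real.exp_nat_mul]; ring_nf
    have h7 : -((k:ℝ)/(9*n)) * m ≤ -(28 * L / 9) * k + 1 := by
      have hq : (28 * (n:ℝ) * L - 1) * (k/(9*n)) ≤ (m:ℝ) * (k/(9*n)) :=
        mul_le_mul_of_nonneg_right hmreal (by positivity)
      have he : (28 * (n:ℝ) * L - 1) * (k/(9*n)) = 28 * L / 9 * k - k/(9*n) := by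
        field_simp
      have hk1 : (k:ℝ)/(9*n) ≤ 1 := le_trans hfrac (by norm_num)
      nlinarith [hq, he, hk1]
    have h8 : Real.exp (-((k:ℝ)/(9*n)) * m) ≤ Real.exp 1 * Real.exp (-(28 * L / 9) * k) := by
      rw [← Real.exp_add]
      apply Real.exp_le_exp.2
      linarith [h7]
    calc ((N - (GoodSet t).card : ℕ) : ℝ)^m ≤ ((N:ℝ) * (1 - k/(9*n)))^m := h3
      _ ≤ (N:ℝ)^m * Real.exp (-(k/(9*n)))^m := h5
      _ = (N:ℝ)^m * Real.exp (-(k/(9*n)) * m) := by rw [h6]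
      _ ≤ (N:ℝ)^m * (Real.exp 1 * Real.exp (-(28 * L / 9) * k)) :=
          mul_le_mul_of_nonneg_left h8 (by positivity)
      _ ≤ (N:ℝ)^m * (3 * Real.exp (-(28 * L / 9) * k)) := by
          refine mul_le_mul_of_nonneg_left ?_ (pow_nonneg hNpos.le m)
          exact mul_le_mul_of_nonneg_right exp_one_lt_three.le (Real.exp_nonneg _)
      _ = 3 * (N:ℝ)^m * Real.exp (-(28 * L / 9) * k) := by ring
  -- fiber counting over triples with fixed I
  set P : Finset (Fin n) → Finset (Fin n → Fin n) :=
    fun I => Fintype.piFinset (fun i => if i ∈ I then (univ : Finset (Fin n)) else {i}) with hP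
  have hPcard : ∀ I : Finset (Fin n), (P I).card = n ^ I.card := by
    intro I
    rw [hP]
    rw [Fintype.card_piFinset]
    have hc1 : ∀ i : Fin n, ((if i ∈ I then (univ : Finset (Fin n)) else {i}).card)
        = if i ∈ I then n else 1 := by
      intro i; split <;> simp
    rw [Finset.prod_congr rfl (fun i _ => hc1 i), Finset.prod_ite_mem, Finset.univ_inter,
      Finset.prod_const]
  have hfiber : ∀ I : Finset (Fin n),
      ((T.filter (fun t => t.1 = I)).card : ℝ) ≤ (n:ℝ) ^ (2 * I.card) := by
    intro I
    have hsub : (T.filter (fun t => t.1 = I)).card ≤ ((P I) ×ˢ (P I)).card := by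
      apply Finset.card_le_card_of_injOn (fun t => (t.2.1, t.2.2))
      · intro t ht
        simp only [mem_coe, mem_filter] at ht
        obtain ⟨htT, htI⟩ := ht
        simp only [hT, mem_filter, mem_univ, true_and] at htT
        rw [Finset.mem_coe, Finset.mem_product]
        constructor
        · rw [hP, Fintype.mem_piFinset]
          intro i
          by_cases hi : i ∈ I
          · simp [hi]
          · simp only [hi, if_false, Finset.mem_singleton]
            exact (htT.2.2.2 i (by rw [htI]; exact hi)).1
        · rw [hP, Fintype.mem_piFinset]
          intro i
          by_cases hi : i ∈ I
          · simp [hi]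
          · simp only [hi, if_false, Finset.mem_singleton]
            exact (htT.2.2.2 i (by rw [htI]; exact hi)).2
      · rintro t ht t' ht' he
        simp only [coe_filter, Set.mem_setOf_eq] at ht ht'
        simp only [Prod.mk.injEq] at he
        have h1 : t.2 = t'.2 := Prod.ext he.1 he.2
        have h2 : t.1 = t'.1 := by rw [ht.2, ht'.2]
        exact Prod.ext h2 h1
    have hPP : ((P I) ×ˢ (P I)).card = n ^ (2 * I.card) := by
      rw [Finset.card_product, hPcard, ← pow_add, two_mul]
    have := le_trans hsub (le_of_eq hPP)
    exact_mod_cast this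
  -- total sum bound
  set r : ℝ := Real.exp (-(L/9)) with hr
  have hrpos : 0 < r := Real.exp_pos _
  have hr7 : r ≤ 1/7 := by
    have h1 : r ≤ Real.exp (-2) := by
      apply Real.exp_le_exp.2
      linarith [hL18]
    have h2 : Real.exp (-2) ≤ 1/7 := by
      rw [Real.exp_neg]
      rw [inv_le_iff_one_le_mul₀ (Real.exp_pos 2)]
      have : (7:ℝ) ≤ Real.exp 2 := by
        have he : Real.exp 2 = (Real.exp 1)^(2:ℕ) := by
          rw [← Real.exp_nat_mul]; norm_num
        have h3 : (2.7182818283:ℝ)^(2:ℕ) ≤ (Real.exp 1)^(2:ℕ) :=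
          pow_le_pow_left₀ (by norm_num) Real.exp_one_gt_d9.le 2
        have : (7:ℝ) ≤ (2.7182818283:ℝ)^(2:ℕ) := by norm_num
        linarith
      linarith
    linarith
  have hNmpos : (0:ℝ) < (N:ℝ)^m := by
    have : (0:ℝ) < N := by exact_mod_cast Nat.factorial_pos n
    positivity
  have hexp_r : ∀ k : ℕ, k ≤ n → (n:ℝ)^(3*k) * Real.exp (-(28 * L / 9) * k) ≤ r^k := by
    intro k _
    have h0 : (n:ℝ) = Real.exp L := (Real.exp_log hnpos).symm
    have h1 : (n:ℝ)^(3*k) = Real.exp (((3*k : ℕ):ℝ) * L) := by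
      rw [h0, Real.exp_nat_mul]
    have h2 : r^k = Real.exp ((k:ℝ) * -(L/9)) := by
      rw [hr, Real.exp_nat_mul]
    rw [h1, h2, ← Real.exp_add]
    apply Real.exp_le_exp.2
    apply le_of_eq
    push_cast
    ring
  -- geometric sum
  have hgeom : ∑ k ∈ Finset.Icc 1 n, r^k ≤ 1/6 := by
    have h1 : ∑ k ∈ Finset.Icc 1 n, r^k ≤ ∑ k ∈ Finset.Icc 1 n, (1/7:ℝ)^k :=
      Finset.sum_le_sum (fun k _ => pow_le_pow_left₀ hrpos.le hr7 k)
    have h2 : ∑ k ∈ Finset.Icc 1 n, (1/7:ℝ)^k = (∑ k ∈ Finset.range (n+1), (1/7:ℝ)^k) - 1 := by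
      rw [← Finset.Ico_add_one_right_eq_Icc, Finset.sum_Ico_eq_sub _ (by omega)]
      simp
    have h3 : ∑ k ∈ Finset.range (n+1), (1/7:ℝ)^k = (1 - (1/7:ℝ)^(n+1)) * (7/6) := by
      rw [geom_sum_eq (by norm_num)]
      field_simp
      ring
    have h4 : (0:ℝ) ≤ (1/7:ℝ)^(n+1) := by positivity
    rw [h2, h3] at h1
    nlinarith [h1, h4]
  -- the grand sum estimate
  have hsum : ∑ t ∈ T, ((N - (GoodSet t).card : ℕ) : ℝ)^m < (N:ℝ)^m := by
    have step1 : ∑ t ∈ T, ((N - (GoodSet t).card : ℕ) : ℝ)^m ≤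
        ∑ t ∈ T, 3 * (N:ℝ)^m * Real.exp (-(28 * L / 9) * t.1.card) :=
      Finset.sum_le_sum hreal
    set P1 : Finset (Finset (Fin n)) := univ.powerset.filter Finset.Nonempty with hP1
    have hmaps : ∀ t ∈ T, t.1 ∈ P1 := by
      intro t ht
      simp only [hT, mem_filter, mem_univ, true_and] at ht
      simp only [hP1, mem_filter, Finset.mem_powerset]
      exact ⟨Finset.subset_univ _, ht.1⟩
    have step2 : ∑ t ∈ T, 3 * (N:ℝ)^m * Real.exp (-(28 * L / 9) * t.1.card) =
        ∑ I ∈ P1, ∑ t ∈ T.filter (fun t => t.1 = I),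
          3 * (N:ℝ)^m * Real.exp (-(28 * L / 9) * t.1.card) :=
      (Finset.sum_fiberwise_of_maps_to hmaps _).symm
    have step3 : ∀ I ∈ P1, ∑ t ∈ T.filter (fun t => t.1 = I),
        3 * (N:ℝ)^m * Real.exp (-(28 * L / 9) * t.1.card) ≤
        (n:ℝ)^(2*I.card) * (3 * (N:ℝ)^m * Real.exp (-(28 * L / 9) * I.card)) := by
      intro I _
      have e1 : ∀ t ∈ T.filter (fun t => t.1 = I),
          3 * (N:ℝ)^m * Real.exp (-(28 * L / 9) * (t.1.card:ℕ)) =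
          3 * (N:ℝ)^m * Real.exp (-(28 * L / 9) * I.card) := by
        intro t ht
        rw [(Finset.mem_filter.mp ht).2]
      rw [Finset.sum_congr rfl e1, Finset.sum_const, nsmul_eq_mul]
      apply mul_le_mul_of_nonneg_right (hfiber I)
      positivity
    -- group by cardinality
    have hmaps2 : ∀ I ∈ P1, I.card ∈ Finset.Icc 1 n := by
      intro I hI
      simp only [hP1, mem_filter, Finset.mem_powerset] at hI
      rw [Finset.mem_Icc]
      exact ⟨Finset.card_pos.mpr hI.2,
        le_trans (Finset.card_le_univ _) (le_of_eq (Fintype.card_fin n))⟩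
    have step5 : ∑ I ∈ P1, (n:ℝ)^(2*I.card) * (3 * (N:ℝ)^m * Real.exp (-(28 * L / 9) * I.card)) =
        ∑ k ∈ Finset.Icc 1 n, ∑ I ∈ P1.filter (fun I => I.card = k),
          (n:ℝ)^(2*I.card) * (3 * (N:ℝ)^m * Real.exp (-(28 * L / 9) * I.card)) :=
      (Finset.sum_fiberwise_of_maps_to hmaps2 _).symm
    have step6 : ∀ k ∈ Finset.Icc 1 n, ∑ I ∈ P1.filter (fun I => I.card = k),
        (n:ℝ)^(2*I.card) * (3 * (N:ℝ)^m * Real.exp (-(28 * L / 9) * I.card)) ≤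
        3 * (N:ℝ)^m * r^k := by
      intro k hk
      have hkn : k ≤ n := (Finset.mem_Icc.mp hk).2
      have e1 : ∀ I ∈ P1.filter (fun I => I.card = k),
          (n:ℝ)^(2*I.card) * (3 * (N:ℝ)^m * Real.exp (-(28 * L / 9) * (I.card:ℕ))) =
          (n:ℝ)^(2*k) * (3 * (N:ℝ)^m * Real.exp (-(28 * L / 9) * k)) := by
        intro I hI
        rw [(Finset.mem_filter.mp hI).2]
      rw [Finset.sum_congr rfl e1, Finset.sum_const, nsmul_eq_mul]
      have hcard : ((P1.filter (fun I => I.card = k)).card : ℝ) ≤ (n:ℝ)^k := by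
        have hsub : P1.filter (fun I => I.card = k) ⊆ Finset.powersetCard k univ := by
          intro I hI
          rw [Finset.mem_powersetCard]
          exact ⟨Finset.subset_univ _, (Finset.mem_filter.mp hI).2⟩
        have h1 : (P1.filter (fun I => I.card = k)).card ≤ n.choose k := by
          refine le_trans (Finset.card_le_card hsub) (le_of_eq ?_)
          rw [Finset.card_powersetCard, Finset.card_univ, Fintype.card_fin]
        exact_mod_cast le_trans h1 (Nat.choose_le_pow n k)
      have hmul : ((P1.filter (fun I => I.card = k)).card : ℝ) *
          ((n:ℝ)^(2*k) * (3 * (N:ℝ)^m * Real.exp (-(28 * L / 9) * k))) ≤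
          (n:ℝ)^k * ((n:ℝ)^(2*k) * (3 * (N:ℝ)^m * Real.exp (-(28 * L / 9) * k))) :=
        mul_le_mul_of_nonneg_right hcard (by positivity)
      refine le_trans hmul ?_
      have e2 : (n:ℝ)^k * ((n:ℝ)^(2*k) * (3 * (N:ℝ)^m * Real.exp (-(28 * L / 9) * k))) =
          3 * (N:ℝ)^m * ((n:ℝ)^(3*k) * Real.exp (-(28 * L / 9) * k)) := by
        rw [show 3*k = k + 2*k by ring, pow_add]
        ring
      rw [e2]
      exact mul_le_mul_of_nonneg_left (hexp_r k hkn) (by positivity)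
    calc ∑ t ∈ T, ((N - (GoodSet t).card : ℕ) : ℝ)^m
        ≤ ∑ t ∈ T, 3 * (N:ℝ)^m * Real.exp (-(28 * L / 9) * t.1.card) := step1
      _ = ∑ I ∈ P1, ∑ t ∈ T.filter (fun t => t.1 = I),
          3 * (N:ℝ)^m * Real.exp (-(28 * L / 9) * t.1.card) := step2
      _ ≤ ∑ I ∈ P1, (n:ℝ)^(2*I.card) * (3 * (N:ℝ)^m * Real.exp (-(28 * L / 9) * I.card)) :=
          Finset.sum_le_sum step3
      _ = ∑ k ∈ Finset.Icc 1 n, ∑ I ∈ P1.filter (fun I => I.card = k),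
          (n:ℝ)^(2*I.card) * (3 * (N:ℝ)^m * Real.exp (-(28 * L / 9) * I.card)) := step5
      _ ≤ ∑ k ∈ Finset.Icc 1 n, 3 * (N:ℝ)^m * r^k := Finset.sum_le_sum step6
      _ = 3 * (N:ℝ)^m * ∑ k ∈ Finset.Icc 1 n, r^k := by rw [Finset.mul_sum]
      _ ≤ 3 * (N:ℝ)^m * (1/6) :=
          mul_le_mul_of_nonneg_left hgeom (by linarith [hNmpos])
      _ < (N:ℝ)^m := by linarith [hNmpos]
  -- existence of a good tuple
  set Bad : Finset (Fin n) × ((Fin n → Fin n) × (Fin n → Fin n)) →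
      Finset (Fin m → Perm (Fin n)) :=
    fun t => Fintype.piFinset (fun _ : Fin m => (GoodSet t)ᶜ) with hBad
  have hBadcard : ∀ t, (Bad t).card = (N - (GoodSet t).card)^m := by
    intro t
    rw [hBad, Fintype.card_piFinset, Finset.prod_const, Finset.card_univ, Fintype.card_fin,
      Finset.card_compl, hNperm]
  have hbig : (T.biUnion Bad).card < Fintype.card (Fin m → Perm (Fin n)) := by
    have h1 : ((T.biUnion Bad).card : ℝ) ≤ ∑ t ∈ T, ((Bad t).card : ℝ) := by
      exact_mod_cast Finset.card_biUnion_le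
    have h2 : ∑ t ∈ T, ((Bad t).card : ℝ) = ∑ t ∈ T, ((N - (GoodSet t).card : ℕ) : ℝ)^m := by
      apply Finset.sum_congr rfl
      intro t _
      rw [hBadcard t]
      push_cast
      rfl
    have h3 : (Fintype.card (Fin m → Perm (Fin n)) : ℝ) = (N:ℝ)^m := by
      rw [Fintype.card_fun, hNperm, Fintype.card_fin]
      push_cast
      rfl
    have : ((T.biUnion Bad).card : ℝ) < (Fintype.card (Fin m → Perm (Fin n)) : ℝ) := by
      rw [h3]
      calc ((T.biUnion Bad).card : ℝ) ≤ ∑ t ∈ T, ((Bad t).card : ℝ) := h1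
        _ = ∑ t ∈ T, ((N - (GoodSet t).card : ℕ) : ℝ)^m := h2
        _ < (N:ℝ)^m := hsum
    exact_mod_cast this
  have hex : ∃ f : Fin m → Perm (Fin n), f ∉ T.biUnion Bad := by
    have hne : ((T.biUnion Bad)ᶜ).Nonempty := by
      rw [← Finset.card_pos, Finset.card_compl]
      omega
    obtain ⟨f, hf⟩ := hne
    exact ⟨f, Finset.mem_compl.mp hf⟩
  obtain ⟨f, hf⟩ := hex
  have hgood : ∀ t ∈ T, ∃ s : Fin m, f s ∈ GoodSet t := by
    intro t ht
    by_contra hcon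
    push_neg at hcon
    apply hf
    apply Finset.mem_biUnion.mpr
    refine ⟨t, ht, ?_⟩
    rw [hBad, Fintype.mem_piFinset]
    intro s
    rw [Finset.mem_compl]
    exact hcon s
  -- the final Q
  refine ⟨Finset.image f univ, ?_, ?_⟩
  · have hc1 : (Finset.image f univ).card ≤ m := by
      refine le_trans Finset.card_image_le (le_of_eq ?_)
      rw [Finset.card_univ, Fintype.card_fin]
    have hc2 : ((Finset.image f univ).card : ℝ) ≤ (m:ℝ) := by exact_mod_cast hc1
    linarith [hc2, hmle]
  · intro I hI v c hv hc
    set t₀ : Finset (Fin n) × ((Fin n → Fin n) × (Fin n → Fin n)) :=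
      (I, (I.piecewise v id, I.piecewise c id)) with ht₀
    have hvI : ∀ i ∈ I, I.piecewise v id i = v i := fun i hi => I.piecewise_eq_of_mem _ _ hi
    have hcI : ∀ i ∈ I, I.piecewise c id i = c i := fun i hi => I.piecewise_eq_of_mem _ _ hi
    have ht₀T : t₀ ∈ T := by
      simp only [hT, mem_filter, mem_univ, true_and, ht₀]
      refine ⟨hI, ?_, ?_, ?_⟩
      · apply hv.congr
        intro i hi
        exact (hvI i hi).symm
      · intro i hi
        rw [hvI i hi, hcI i hi]
        exact hc i hi
      · intro i hi
        rw [I.piecewise_eq_of_notMem _ _ hi, I.piecewise_eq_of_notMem _ _ hi]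
        exact ⟨rfl, rfl⟩
    obtain ⟨s, hs⟩ := hgood t₀ ht₀T
    simp only [hGoodSet, mem_filter, mem_univ, true_and, ht₀] at hs
    refine ⟨f s, Finset.mem_image_of_mem f (Finset.mem_univ s), ?_, ?_⟩
    · intro i hi
      have := hs.1 i hi
      rwa [hvI i hi] at this
    · obtain ⟨i, hi, he⟩ := hs.2
      exact ⟨i, hi, by rwa [hcI i hi] at he⟩


open Finset

/-- There is a set `Q` of at most `28 n log n` permutations such that for every
nonempty `I`, valid colouring `v` and colouring `c` disjoint from `v` on `I`,
some `q ∈ Q` discriminates `v` from `c` on `I`. -/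
theorem stmt_9 :
    ∃ (C : ℝ) (n₀ : ℕ), C = 28 ∧ ∀ n ≥ n₀,
      ∃ Q : Finset (Equiv.Perm (Fin n)),
        (Q.card : ℝ) ≤ C * n * Real.log n ∧
        ∀ (I : Finset (Fin n)), I.Nonempty →
          ∀ (v c : Fin n → Fin n), Set.InjOn v I →
            (∀ i ∈ I, c i ≠ v i) →
            ∃ q ∈ Q, (∀ i ∈ I, q i ≠ v i) ∧ ∃ i ∈ I, q i = c i := by
  refine ⟨28, 10^8, rfl, fun n hn => ?_⟩
  exact main_step hn
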